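/- Let f be a closed proper convex function on a finite-dimensional real inner product space V (identified with its dual). Then the dimension of E(f) = {v : ∃a, ∀x, f(x+v) = f(x)+a} equals the codimension of the affine span H(f*) of dom(f*) in V. -/

import Mathlib

/-- The epigraph of an `EReal`-valued function. -/
def epigraph {V : Type*} (f : V → EReal) : Set (V × ℝ) :=
  {p | f p.1 ≤ (p.2 : EReal)}

/-- A function `f : V → ℝ ∪ {+∞}` (never `-∞`) is closed proper convex if its
epigraph is closed, convex and nonempty. -/
def ClosedProperConvexOn {V : Type*} [NormedAddCommGroup V] [NormedSpace ℝ V]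
    (f : V → EReal) : Prop :=
  (∀ x, f x ≠ ⊥) ∧ IsClosed (epigraph f) ∧ Convex ℝ (epigraph f) ∧
    (epigraph f).Nonempty

/-- The Legendre transform on an inner product space, identified with its dual
via the inner product pairing: `f*(w) = sup_{x ∈ dom f} (⟪x,w⟫ - f x)`. -/
noncomputable def legendreInner {V : Type*} [NormedAddCommGroup V]
    [InnerProductSpace ℝ V] (f : V → EReal) (w : V) : EReal :=
  ⨆ x : {x : V // f x ≠ ⊤}, (((inner ℝ x.1 w : ℝ) : EReal) - f x.1)

section Aux
set_option linter.unusedSectionVars false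
set_option linter.unusedVariables false


variable {V : Type*} [NormedAddCommGroup V] [InnerProductSpace ℝ V] [FiniteDimensional ℝ V]
variable {f : V → EReal}

/-- Separation: a point outside the epigraph can be separated by (w, s, c) with s ≥ 0. -/
lemma sep_epigraph (hf : ClosedProperConvexOn f) {p : V × ℝ} (hp : p ∉ epigraph f) :
    ∃ (w : V) (s c : ℝ), 0 ≤ s ∧ ((inner ℝ p.1 w : ℝ) + s * p.2 < c) ∧
      ∀ (y : V) (t : ℝ), f y ≤ (t : EReal) → c < (inner ℝ y w : ℝ) + s * t := by
  obtain ⟨hbot, hcl, hconv, hne⟩ := hf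
  obtain ⟨l, c, hlt, hgt⟩ := geometric_hahn_banach_point_closed hconv hcl hp
  set s : ℝ := l (0, 1) with hs
  set w : V := (InnerProductSpace.toDual ℝ V).symm
    (l.comp (ContinuousLinearMap.inl ℝ V ℝ)) with hw
  have hlw : ∀ (x : V) (t : ℝ), l (x, t) = (inner ℝ x w : ℝ) + s * t := by
    intro x t
    have h1 : (x, t) = (x, (0:ℝ)) + t • ((0:V), (1:ℝ)) := by
      simp [Prod.ext_iff]
    rw [h1, map_add, map_smul]
    have h2 : (inner ℝ x w : ℝ) = l (x, 0) := by
      rw [hw, real_inner_comm]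
      exact InnerProductSpace.toDual_symm_apply
    rw [h2]
    simp [hs, smul_eq_mul]
    ring
  obtain ⟨q, hq⟩ := hne
  have hsnn : 0 ≤ s := by
    by_contra hneg
    push_neg at hneg
    have key : ∀ n : ℝ, 0 ≤ n → c < (inner ℝ q.1 w : ℝ) + s * (q.2 + n) := by
      intro n hn
      have hmem : (q.1, q.2 + n) ∈ epigraph f := by
        have hq' : f q.1 ≤ (q.2 : EReal) := hq
        exact le_trans hq' (by exact_mod_cast (by linarith : q.2 ≤ q.2 + n))
      have := hgt _ hmem
      rwa [hlw] at this
    have k0 := key 0 le_rfl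
    set n := (c - (inner ℝ q.1 w : ℝ) - s * q.2 - 1) / s with hn
    have hnpos : 0 < n := by
      rw [hn]
      apply div_pos_of_neg_of_neg _ hneg
      nlinarith
    have kn := key n hnpos.le
    have hsn : s * n = c - (inner ℝ q.1 w : ℝ) - s * q.2 - 1 := by
      rw [hn, mul_div_cancel₀ _ (ne_of_lt hneg)]
    nlinarith
  refine ⟨w, s, c, hsnn, by rw [← hlw]; exact hlt, ?_⟩
  intro y t hyt
  have := hgt (y, t) hyt
  rwa [hlw] at this

lemma dom_nonempty (hf : ClosedProperConvexOn f) : ∃ x : V, f x ≠ ⊤ := by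
  obtain ⟨q, hq⟩ := hf.2.2.2
  exact ⟨q.1, fun h => by simp [epigraph, h] at hq⟩

lemma legendre_le (hf : ClosedProperConvexOn f) {w : V} {c : ℝ}
    (h : ∀ x : V, f x ≠ ⊤ → (inner ℝ x w : ℝ) - (f x).toReal ≤ c) :
    legendreInner f w ≤ (c : EReal) := by
  refine iSup_le fun x => ?_
  have hreal : f x.1 = ((f x.1).toReal : EReal) := (EReal.coe_toReal x.2 (hf.1 x.1)).symm
  rw [hreal, ← EReal.coe_sub]
  exact_mod_cast h x.1 x.2

lemma legendre_ne_bot (hf : ClosedProperConvexOn f) (w : V) : legendreInner f w ≠ ⊥ := by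
  obtain ⟨x₀, hx₀⟩ := dom_nonempty hf
  have hle : (((inner ℝ x₀ w : ℝ) : EReal) - f x₀) ≤ legendreInner f w :=
    le_iSup (fun x : {x : V // f x ≠ ⊤} => (((inner ℝ x.1 w : ℝ) : EReal) - f x.1)) ⟨x₀, hx₀⟩
  have hreal : f x₀ = ((f x₀).toReal : EReal) := (EReal.coe_toReal hx₀ (hf.1 x₀)).symm
  intro hb
  rw [hb] at hle
  simp only [le_bot_iff] at hle
  rw [hreal, ← EReal.coe_sub] at hle
  exact EReal.coe_ne_bot _ hle

lemma bound_of_mem_dom (hf : ClosedProperConvexOn f) {w : V}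
    (hw : legendreInner f w ≠ ⊤) {x : V} (hx : f x ≠ ⊤) :
    (inner ℝ x w : ℝ) - (f x).toReal ≤ (legendreInner f w).toReal := by
  have hle : (((inner ℝ x w : ℝ) : EReal) - f x) ≤ legendreInner f w :=
    le_iSup (fun x : {x : V // f x ≠ ⊤} => (((inner ℝ x.1 w : ℝ) : EReal) - f x.1)) ⟨x, hx⟩
  have hreal : f x = ((f x).toReal : EReal) := (EReal.coe_toReal hx (hf.1 x)).symm
  rw [hreal, ← EReal.coe_sub] at hle
  have h2 : legendreInner f w = ((legendreInner f w).toReal : EReal) :=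
    (EReal.coe_toReal hw (legendre_ne_bot hf w)).symm
  rw [h2] at hle
  exact_mod_cast hle

lemma dom_conj_nonempty (hf : ClosedProperConvexOn f) :
    ∃ w : V, legendreInner f w ≠ ⊤ := by
  obtain ⟨x₀, hx₀⟩ := dom_nonempty hf
  set r : ℝ := (f x₀).toReal with hr
  have hfx₀ : f x₀ = (r : EReal) := (EReal.coe_toReal hx₀ (hf.1 x₀)).symm
  have hp : (x₀, r - 1) ∉ epigraph f := by
    intro h
    have h' : f x₀ ≤ ((r - 1 : ℝ) : EReal) := h
    rw [hfx₀] at h'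
    have : r ≤ r - 1 := by exact_mod_cast h'
    linarith
  obtain ⟨w, s, c, hs, hpt, hsep⟩ := sep_epigraph hf hp
  simp only at hpt
  have hc : c < (inner ℝ x₀ w : ℝ) + s * r := hsep x₀ r (le_of_eq hfx₀)
  have hspos : 0 < s := by nlinarith
  refine ⟨-(s⁻¹) • w, ne_top_of_le_ne_top (EReal.coe_ne_top (-(c / s)))
    (legendre_le hf fun x hx => ?_)⟩
  have hbd := hsep x ((f x).toReal) (le_of_eq (EReal.coe_toReal hx (hf.1 x)).symm)
  rw [real_inner_smul_right]
  have hs' : 0 < s⁻¹ := inv_pos.2 hspos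
  rw [div_eq_mul_inv]
  have h2 := mul_lt_mul_of_pos_left hbd hs'
  have h3 : s⁻¹ * ((inner ℝ x w : ℝ) + s * (f x).toReal)
      = s⁻¹ * (inner ℝ x w : ℝ) + (f x).toReal := by
    field_simp
  rw [h3] at h2
  linarith

lemma legendre_sep_ne_top (hf : ClosedProperConvexOn f) {w : V} {s c : ℝ}
    (hspos : 0 < s)
    (hsep : ∀ (y : V) (t : ℝ), f y ≤ (t : EReal) → c < (inner ℝ y w : ℝ) + s * t) :
    legendreInner f (-(s⁻¹) • w) ≠ ⊤ := by
  refine ne_top_of_le_ne_top (EReal.coe_ne_top (-(c * s⁻¹))) (legendre_le hf fun x hx => ?_)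
  have hbd := hsep x ((f x).toReal) (le_of_eq (EReal.coe_toReal hx (hf.1 x)).symm)
  rw [real_inner_smul_right]
  have hs' : 0 < s⁻¹ := inv_pos.2 hspos
  have h2 := mul_lt_mul_of_pos_left hbd hs'
  have h3 : s⁻¹ * ((inner ℝ x w : ℝ) + s * (f x).toReal)
      = s⁻¹ * (inner ℝ x w : ℝ) + (f x).toReal := by
    field_simp
  rw [h3] at h2
  linarith

lemma recession (hf : ClosedProperConvexOn f) {v : V} {a : ℝ}
    (hva : ∀ w : V, legendreInner f w ≠ ⊤ → (inner ℝ v w : ℝ) ≤ a) :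
    ∀ (x : V) (t : ℝ), f x ≤ (t : EReal) → f (x + v) ≤ ((t + a : ℝ) : EReal) := by
  intro x t hxt
  by_contra hc
  have hp : (x + v, t + a) ∉ epigraph f := hc
  obtain ⟨w, s, c, hs, hpt, hsep⟩ := sep_epigraph hf hp
  simp only at hpt
  have hx2 : c < (inner ℝ x w : ℝ) + s * t := hsep x t hxt
  have hinner : (inner ℝ (x + v) w : ℝ) = (inner ℝ x w : ℝ) + (inner ℝ v w : ℝ) :=
    inner_add_left x v w
  rw [hinner] at hpt
  rcases eq_or_lt_of_le hs with hs0 | hspos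
  · -- vertical case: s = 0
    have hvw : (inner ℝ v w : ℝ) < 0 := by rw [← hs0] at hpt hx2; nlinarith
    obtain ⟨w₁, hw₁⟩ := dom_conj_nonempty hf
    set M₁ := (legendreInner f w₁).toReal with hM₁
    have key : ∀ lam : ℝ, 0 ≤ lam → (inner ℝ v w₁ : ℝ) - lam * (inner ℝ v w : ℝ) ≤ a := by
      intro lam hlam
      have hmem : legendreInner f (w₁ - lam • w) ≠ ⊤ := by
        refine ne_top_of_le_ne_top (EReal.coe_ne_top (M₁ - lam * c))
          (legendre_le hf fun y hy => ?_)
        have h1 := bound_of_mem_dom hf hw₁ hy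
        have h2 := hsep y ((f y).toReal) (le_of_eq (EReal.coe_toReal hy (hf.1 y)).symm)
        rw [← hs0] at h2
        rw [inner_sub_right, real_inner_smul_right]
        nlinarith [mul_le_mul_of_nonneg_left h2.le hlam]
      have := hva _ hmem
      rwa [inner_sub_right, real_inner_smul_right] at this
    have h0 : (inner ℝ v w₁ : ℝ) ≤ a := by have := key 0 le_rfl; linarith
    set lam := (a + 1 - (inner ℝ v w₁ : ℝ)) / (-(inner ℝ v w : ℝ)) with hlam
    have hlampos : 0 < lam := div_pos (by linarith) (by linarith)
    have hkl := key lam hlampos.le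
    have hprod : lam * (-(inner ℝ v w : ℝ)) = a + 1 - (inner ℝ v w₁ : ℝ) := by
      rw [hlam, div_mul_cancel₀]
      linarith
    nlinarith
  · -- nonvertical case: s > 0
    have hdom := legendre_sep_ne_top hf hspos hsep
    have hva' := hva _ hdom
    rw [real_inner_smul_right] at hva'
    have hs' : 0 < s⁻¹ := inv_pos.2 hspos
    have h4 := mul_le_mul_of_nonneg_left hva' hs
    rw [show s * (-s⁻¹ * (inner ℝ v w : ℝ)) = -(s * s⁻¹) * (inner ℝ v w : ℝ) by ring,
      mul_inv_cancel₀ (ne_of_gt hspos)] at h4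
    nlinarith

lemma inner_le_of_shift (hf : ClosedProperConvexOn f) {v : V} {a : ℝ}
    (hv : ∀ x : V, f (x + v) = f x + (a : EReal)) {w : V}
    (hw : legendreInner f w ≠ ⊤) : (inner ℝ v w : ℝ) ≤ a := by
  set M := (legendreInner f w).toReal with hM
  have key : ∀ x : V, f x ≠ ⊤ →
      (inner ℝ x w : ℝ) - (f x).toReal ≤ M - (inner ℝ v w : ℝ) + a := by
    intro x hx
    set r := (f x).toReal with hr
    have hfx : f x = (r : EReal) := (EReal.coe_toReal hx (hf.1 x)).symm
    have hxv : f (x + v) = ((r + a : ℝ) : EReal) := by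
      rw [hv x, hfx, ← EReal.coe_add]
    have hxvt : f (x + v) ≠ ⊤ := by rw [hxv]; exact EReal.coe_ne_top _
    have hb := bound_of_mem_dom hf hw hxvt
    rw [hxv] at hb
    simp only [EReal.toReal_coe] at hb
    rw [inner_add_left] at hb
    rw [← hM] at hb
    linarith
  have h2 := legendre_le hf key
  have h3 : legendreInner f w = (M : EReal) := (EReal.coe_toReal hw (legendre_ne_bot hf w)).symm
  rw [h3] at h2
  have : M ≤ M - (inner ℝ v w : ℝ) + a := by exact_mod_cast h2
  linarith

lemma shift_neg (hbot : ∀ x : V, f x ≠ ⊥) {v : V} {a : ℝ}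
    (hv : ∀ x : V, f (x + v) = f x + (a : EReal)) :
    ∀ x : V, f (x + -v) = f x + ((-a : ℝ) : EReal) := by
  intro x
  have h1 : f ((x + -v) + v) = f (x + -v) + (a : EReal) := hv (x + -v)
  have h2 : (x + -v) + v = x := by abel
  rw [h2] at h1
  have h3 : f (x + -v) = f x - (a : EReal) := by
    rw [h1, EReal.add_sub_cancel_right]
  rw [h3, EReal.coe_neg, sub_eq_add_neg]

lemma shift_of_inner (hf : ClosedProperConvexOn f) {v : V} {a : ℝ}
    (hva : ∀ w : V, legendreInner f w ≠ ⊤ → (inner ℝ v w : ℝ) = a) :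
    ∀ x : V, f (x + v) = f x + (a : EReal) := by
  have hfwd := recession hf (v := v) (a := a) (fun w hw => (hva w hw).le)
  have hbwd := recession hf (v := -v) (a := -a) (fun w hw => by
    simp [inner_neg_left, hva w hw])
  intro x
  rcases eq_or_ne (f x) ⊤ with hx | hx
  · rw [hx, EReal.top_add_coe]
    by_contra hne
    have hxvt : f (x + v) ≠ ⊤ := hne
    have hr := hbwd (x + v) ((f (x + v)).toReal)
      (le_of_eq (EReal.coe_toReal hxvt (hf.1 _)).symm)
    rw [add_neg_cancel_right] at hr
    rw [hx] at hr
    exact absurd hr (not_le_of_gt (EReal.coe_lt_top _))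
  · set r := (f x).toReal with hrdef
    have hfx : f x = (r : EReal) := (EReal.coe_toReal hx (hf.1 x)).symm
    have h1 : f (x + v) ≤ ((r + a : ℝ) : EReal) := hfwd x r (le_of_eq hfx)
    have hxvt : f (x + v) ≠ ⊤ := ne_top_of_le_ne_top (EReal.coe_ne_top _) h1
    set r' := (f (x + v)).toReal with hr'def
    have hfxv : f (x + v) = (r' : EReal) := (EReal.coe_toReal hxvt (hf.1 _)).symm
    have h2 : f x ≤ ((r' + -a : ℝ) : EReal) := by
      have := hbwd (x + v) r' (le_of_eq hfxv)
      rwa [add_neg_cancel_right] at this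
    rw [hfx] at h2
    rw [hfxv] at h1
    have h1' : r' ≤ r + a := by exact_mod_cast h1
    have h2' : r ≤ r' + -a := by exact_mod_cast h2
    have : r' = r + a := by linarith
    rw [hfxv, this, hfx, ← EReal.coe_add]

theorem finrank_E_add_finrank_direction_eq'
    (f : V → EReal) (hf : ClosedProperConvexOn f) :
    Module.finrank ℝ
        (Submodule.span ℝ
          {v : V | ∃ a : ℝ, ∀ x : V, f (x + v) = f x + (a : EReal)}) +
      Module.finrank ℝ
        (affineSpan ℝ {w : V | legendreInner f w ≠ ⊤}).direction =
      Module.finrank ℝ V := by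
  set D : Set V := {w : V | legendreInner f w ≠ ⊤} with hD
  set W : Submodule ℝ V := (affineSpan ℝ D).direction with hW
  have hWv : W = vectorSpan ℝ D := direction_affineSpan ℝ D
  have hset : {v : V | ∃ a : ℝ, ∀ x : V, f (x + v) = f x + (a : EReal)} = ↑(Wᗮ) := by
    ext v
    simp only [Set.mem_setOf_eq, SetLike.mem_coe]
    constructor
    · rintro ⟨a, ha⟩
      have hconst : ∀ w ∈ D, (inner ℝ v w : ℝ) = a := by
        intro w hw
        have h1 := inner_le_of_shift hf ha hw
        have h2 := inner_le_of_shift hf (shift_neg hf.1 ha) hw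
        rw [inner_neg_left] at h2
        linarith
      rw [Submodule.mem_orthogonal]
      intro u hu
      rw [hWv, vectorSpan_def] at hu
      induction hu using Submodule.span_induction with
      | mem u hu =>
        obtain ⟨w₁, hw₁, w₂, hw₂, rfl⟩ := hu
        show (inner ℝ (w₁ - w₂) v : ℝ) = 0
        rw [inner_sub_left, real_inner_comm v w₁, real_inner_comm v w₂,
          hconst w₁ hw₁, hconst w₂ hw₂, sub_self]
      | zero => rw [inner_zero_left]
      | add u₁ u₂ _ _ h1 h2 => rw [inner_add_left, h1, h2, add_zero]
      | smul c u _ h => rw [real_inner_smul_left, h, mul_zero]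
    · intro hv
      obtain ⟨w₀, hw₀⟩ := dom_conj_nonempty hf
      refine ⟨(inner ℝ v w₀ : ℝ), shift_of_inner hf fun w hw => ?_⟩
      have hmem : w - w₀ ∈ W := by
        rw [hWv]
        exact vsub_mem_vectorSpan ℝ hw hw₀
      have h0 : (inner ℝ (w - w₀) v : ℝ) = 0 := (Submodule.mem_orthogonal W v).1 hv _ hmem
      rw [inner_sub_left] at h0
      rw [real_inner_comm v w, real_inner_comm v w₀] at h0
      linarith [h0]
  rw [hset, Submodule.span_eq]
  have horth := Submodule.finrank_add_finrank_orthogonal (Wᗮ)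
  rwa [Submodule.orthogonal_orthogonal] at horth

end Aux

/-- for a closed proper convex function `f` on a
finite-dimensional real inner product space, `dim E(f)` equals the codimension
of the affine span `H(f*)` of `dom f*`, i.e.
`dim E(f) + dim direction(H(f*)) = dim V`. -/
theorem finrank_E_add_finrank_direction_eq
    {V : Type*} [NormedAddCommGroup V] [InnerProductSpace ℝ V]
    [FiniteDimensional ℝ V]
    (f : V → EReal) (hf : ClosedProperConvexOn f) :
    Module.finrank ℝ
        (Submodule.span ℝ
          {v : V | ∃ a : ℝ, ∀ x : V, f (x + v) = f x + (a : EReal)}) +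
      Module.finrank ℝ
        (affineSpan ℝ {w : V | legendreInner f w ≠ ⊤}).direction =
      Module.finrank ℝ V := by
  exact finrank_E_add_finrank_direction_eq' f hf
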